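/- Let h, P, σ² > 0 and λ > 0 with h·P > 1/λ − σ² and λ·σ² ≤ 1. Then the function L(α) = log(1 + α·h·P/σ²) + λ·(1 − α)·h·P attains its maximum over α ∈ [0,1] at α* = 1/(λhP) − σ²/(hP), and the corresponding power allocated to information decoding is α*·h·P = 1/λ − σ², a constant independent of h. -/

import Mathlib

open Real Set

theorem stmt1 (h P σ2 lam : ℝ) (hh : 0 < h) (hP : 0 < P) (hσ : 0 < σ2)
    (hlam : 0 < lam) (hcond : h * P > 1 / lam - σ2) (hls : lam * σ2 ≤ 1) :
    IsMaxOn (fun α : ℝ => Real.log (1 + α * h * P / σ2) + lam * (1 - α) * h * P)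
      (Set.Icc 0 1) (1 / (lam * h * P) - σ2 / (h * P)) ∧
    (1 / (lam * h * P) - σ2 / (h * P)) * h * P = 1 / lam - σ2 := by
  have hhP : 0 < h * P := mul_pos hh hP
  have hstar : (1 / (lam * h * P) - σ2 / (h * P)) * h * P = 1 / lam - σ2 := by
    field_simp
  refine ⟨?_, hstar⟩
  intro α hα
  simp only [Set.mem_Icc] at hα
  simp only [Set.mem_setOf_eq]
  set αs := 1 / (lam * h * P) - σ2 / (h * P) with hαs
  have hB : 1 + αs * h * P / σ2 = 1 / (lam * σ2) := by
    rw [hstar]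
    field_simp
    ring
  have hBpos : (0:ℝ) < 1 + αs * h * P / σ2 := by
    rw [hB]; positivity
  have hApos : (0:ℝ) < 1 + α * h * P / σ2 := by
    have : 0 ≤ α * h * P / σ2 := by
      apply div_nonneg _ hσ.le
      have := hα.1
      positivity
    linarith
  have hlog : Real.log (1 + α * h * P / σ2) - Real.log (1 + αs * h * P / σ2)
      ≤ (1 + α * h * P / σ2) / (1 + αs * h * P / σ2) - 1 := by
    rw [← Real.log_div (ne_of_gt hApos) (ne_of_gt hBpos)]
    exact Real.log_le_sub_one_of_pos (div_pos hApos hBpos)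
  have hratio : (1 + α * h * P / σ2) / (1 + αs * h * P / σ2) - 1
      = lam * (α - αs) * h * P := by
    rw [hB]
    have h1 : αs * (h * P) = 1 / lam - σ2 := by
      rw [← hstar]; ring
    have h3 : lam * (αs * (h * P)) = 1 - lam * σ2 := by
      rw [h1]; field_simp
    field_simp
    linear_combination h3
  rw [hratio] at hlog
  nlinarith [hlog]
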